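/- Let t : Fin n → A × B with n ≥ 2 model a bag relation, let K be the number of distinct X-values of t (the cardinality of the image of i ↦ (t i).1), and let pdepY := Σ_b p₂(b)². Then the average of pdep(t_σ) over all n! permutations σ of Fin n equals pdepY + ((K−1)/(n−1))·(1 − pdepY). (Expected value of probabilistic dependency under random (X;Y)-permutations, Piatetsky-Shapiro–Matheus.) -/

import Mathlib

namespace AFD

open Finset

variable {A B : Type*}

/-- Number of indices with X-value `a`. -/
def c1 {n : ℕ} [DecidableEq A] (t : Fin n → A × B) (a : A) : ℕ :=
  (Finset.univ.filter fun i => (t i).1 = a).card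

/-- Number of indices with Y-value `b`. -/
def c2 {n : ℕ} [DecidableEq B] (t : Fin n → A × B) (b : B) : ℕ :=
  (Finset.univ.filter fun i => (t i).2 = b).card

/-- Number of indices with tuple value `(a, b)`. -/
def cnt {n : ℕ} [DecidableEq A] [DecidableEq B] (t : Fin n → A × B) (a : A) (b : B) : ℕ :=
  (Finset.univ.filter fun i => t i = (a, b)).card

/-- Marginal probability of X-value `a`. -/
noncomputable def p1 {n : ℕ} [DecidableEq A] (t : Fin n → A × B) (a : A) : ℝ :=
  (c1 t a : ℝ) / n

/-- Marginal probability of Y-value `b`. -/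
noncomputable def p2 {n : ℕ} [DecidableEq B] (t : Fin n → A × B) (b : B) : ℝ :=
  (c2 t b : ℝ) / n

/-- Joint probability of `(a, b)`. -/
noncomputable def pJ {n : ℕ} [DecidableEq A] [DecidableEq B] (t : Fin n → A × B)
    (a : A) (b : B) : ℝ :=
  (cnt t a b : ℝ) / n

/-- Conditional probability of Y-value `b` given X-value `a` (with the `0/0 = 0` convention,
which is automatic for real division in Lean). -/
noncomputable def pC {n : ℕ} [DecidableEq A] [DecidableEq B] (t : Fin n → A × B)
    (a : A) (b : B) : ℝ :=
  pJ t a b / p1 t a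

/-- The set of distinct X-values. -/
def domX {n : ℕ} [DecidableEq A] (t : Fin n → A × B) : Finset A :=
  Finset.univ.image fun i => (t i).1

/-- The set of distinct Y-values. -/
def domY {n : ℕ} [DecidableEq B] (t : Fin n → A × B) : Finset B :=
  Finset.univ.image fun i => (t i).2

/-- The set of distinct tuples. -/
def domXY {n : ℕ} [DecidableEq A] [DecidableEq B] (t : Fin n → A × B) : Finset (A × B) :=
  Finset.univ.image t

/-- The probabilistic dependency `pdep(X → Y)`. -/
noncomputable def pdep {n : ℕ} [DecidableEq A] [DecidableEq B] (t : Fin n → A × B) : ℝ :=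
  ∑ a ∈ domX t, p1 t a * ∑ b ∈ domY t, (pC t a b) ^ 2

/-- The probabilistic self-dependency `pdep(Y)`. -/
noncomputable def pdepY {n : ℕ} [DecidableEq B] (t : Fin n → A × B) : ℝ :=
  ∑ b ∈ domY t, (p2 t b) ^ 2

/-- The (X;Y)-permutation of `t` induced by the permutation `σ`. -/
def permRel {n : ℕ} (t : Fin n → A × B) (σ : Equiv.Perm (Fin n)) : Fin n → A × B :=
  fun i => ((t i).1, (t (σ i)).2)

/-- `t` satisfies the functional dependency X → Y. -/
def satFD {n : ℕ} (t : Fin n → A × B) : Prop :=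
  ∀ i j, (t i).1 = (t j).1 → (t i).2 = (t j).2


section PermCount

variable {n : ℕ}

open Equiv


lemma fiber_const (i x y : Fin n) :
    (univ.filter fun σ : Perm (Fin n) => σ i = x).card =
    (univ.filter fun σ : Perm (Fin n) => σ i = y).card := by
  apply Finset.card_bij' (fun σ _ => Equiv.swap x y * σ) (fun σ _ => Equiv.swap x y * σ)
  · intro σ hσ
    simp only [mem_filter, mem_univ, true_and] at hσ ⊢
    simp [Perm.mul_apply, hσ]
  · intro σ hσ
    simp only [mem_filter, mem_univ, true_and] at hσ ⊢
    simp [Perm.mul_apply, hσ, Equiv.swap_apply_right]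
  · intro σ _; simp [← mul_assoc]
  · intro σ _; simp [← mul_assoc]

lemma card_fix (i x : Fin n) :
    (univ.filter fun σ : Perm (Fin n) => σ i = x).card = (n - 1).factorial := by
  have hpos : 0 < n := i.pos
  have hsum : (univ : Finset (Perm (Fin n))).card =
      ∑ y : Fin n, (univ.filter fun σ : Perm (Fin n) => σ i = y).card :=
    Finset.card_eq_sum_card_fiberwise (fun σ _ => mem_univ (σ i))
  have hconst : ∀ y : Fin n, (univ.filter fun σ : Perm (Fin n) => σ i = y).card
      = (univ.filter fun σ : Perm (Fin n) => σ i = x).card := fun y => fiber_const i y x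
  rw [Finset.sum_congr rfl (fun y _ => hconst y), Finset.sum_const, smul_eq_mul] at hsum
  simp only [card_univ, Fintype.card_perm, Fintype.card_fin] at hsum
  have hfac : n * (n-1).factorial = n.factorial := Nat.mul_factorial_pred hpos.ne'
  exact Nat.eq_of_mul_eq_mul_left hpos (hsum.symm.trans hfac.symm)

lemma pair_fiber_const (i j x y y' : Fin n) (hy : y ≠ x) (hy' : y' ≠ x) :
    (univ.filter fun σ : Perm (Fin n) => σ i = x ∧ σ j = y).card =
    (univ.filter fun σ : Perm (Fin n) => σ i = x ∧ σ j = y').card := by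
  apply Finset.card_bij' (fun σ _ => Equiv.swap y y' * σ) (fun σ _ => Equiv.swap y y' * σ)
  · intro σ hσ
    simp only [mem_filter, mem_univ, true_and] at hσ ⊢
    obtain ⟨h1, h2⟩ := hσ
    constructor
    · simp [Perm.mul_apply, h1, Equiv.swap_apply_of_ne_of_ne hy.symm hy'.symm]
    · simp [Perm.mul_apply, h2]
  · intro σ hσ
    simp only [mem_filter, mem_univ, true_and] at hσ ⊢
    obtain ⟨h1, h2⟩ := hσ
    constructor
    · simp [Perm.mul_apply, h1, Equiv.swap_apply_of_ne_of_ne hy.symm hy'.symm]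
    · simp [Perm.mul_apply, h2, Equiv.swap_apply_right]
  · intro σ _; simp [← mul_assoc]
  · intro σ _; simp [← mul_assoc]

lemma card_pair_fix (hn : 2 ≤ n) (i j : Fin n) (hij : i ≠ j) (x y : Fin n) (hxy : x ≠ y) :
    (univ.filter fun σ : Perm (Fin n) => σ i = x ∧ σ j = y).card = (n - 2).factorial := by
  have h1 : 0 < n - 1 := by omega
  have hsum : (univ.filter fun σ : Perm (Fin n) => σ i = x).card =
      ∑ y' : Fin n, ((univ.filter fun σ : Perm (Fin n) => σ i = x).filter
        fun σ => σ j = y').card :=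
    Finset.card_eq_sum_card_fiberwise (fun σ _ => mem_univ (σ j))
  simp only [Finset.filter_filter] at hsum
  rw [card_fix] at hsum
  -- split off y' = x
  rw [← Finset.sum_erase_add _ _ (mem_univ x)] at hsum
  have hzero : (univ.filter fun σ : Perm (Fin n) => σ i = x ∧ σ j = x).card = 0 := by
    rw [Finset.card_eq_zero, Finset.filter_eq_empty_iff]
    intro σ _
    rintro ⟨h1', h2'⟩
    exact hij (σ.injective (h1'.trans h2'.symm))
  rw [hzero, add_zero] at hsum
  have hconst : ∀ y' ∈ univ.erase x,
      (univ.filter fun σ : Perm (Fin n) => σ i = x ∧ σ j = y').card =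
      (univ.filter fun σ : Perm (Fin n) => σ i = x ∧ σ j = y).card := by
    intro y' hy'
    exact pair_fiber_const i j x y' y (Finset.mem_erase.mp hy').1 hxy.symm
  rw [Finset.sum_congr rfl hconst, Finset.sum_const, smul_eq_mul, Finset.card_erase_of_mem
    (mem_univ x), card_univ, Fintype.card_fin] at hsum
  have hfac : (n - 1) * (n - 2).factorial = (n - 1).factorial := by
    have := Nat.mul_factorial_pred h1.ne'
    simpa [show n - 1 - 1 = n - 2 by omega] using this
  exact Nat.eq_of_mul_eq_mul_left h1 (by omega)

lemma card_mem_fix (i : Fin n) (T : Finset (Fin n)) :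
    (univ.filter fun σ : Perm (Fin n) => σ i ∈ T).card = T.card * (n - 1).factorial := by
  have hsum : (univ.filter fun σ : Perm (Fin n) => σ i ∈ T).card =
      ∑ x ∈ T, ((univ.filter fun σ : Perm (Fin n) => σ i ∈ T).filter fun σ => σ i = x).card :=
    Finset.card_eq_sum_card_fiberwise (fun σ hσ => (mem_filter.mp hσ).2)
  rw [hsum]
  rw [Finset.sum_congr rfl (fun x hx => ?_), Finset.sum_const, smul_eq_mul]
  rw [Finset.filter_filter]
  have : Finset.filter (fun σ : Perm (Fin n) => σ i ∈ T ∧ σ i = x) univ =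
      Finset.filter (fun σ : Perm (Fin n) => σ i = x) univ := by
    apply Finset.filter_congr
    intro σ _
    constructor
    · exact fun h => h.2
    · exact fun h => ⟨h ▸ hx, h⟩
  rw [this]
  exact card_fix i x

lemma card_pair_mem (hn : 2 ≤ n) (i j : Fin n) (hij : i ≠ j) (T : Finset (Fin n)) :
    (univ.filter fun σ : Perm (Fin n) => σ i ∈ T ∧ σ j ∈ T).card =
      T.card * (T.card - 1) * (n - 2).factorial := by
  have hsum : (univ.filter fun σ : Perm (Fin n) => σ i ∈ T ∧ σ j ∈ T).card =
      ∑ p ∈ T ×ˢ T, ((univ.filter fun σ : Perm (Fin n) => σ i ∈ T ∧ σ j ∈ T).filter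
        fun σ => (σ i, σ j) = p).card :=
    Finset.card_eq_sum_card_fiberwise (fun σ hσ => by
      have := (mem_filter.mp hσ).2
      exact Finset.mem_product.mpr ⟨this.1, this.2⟩)
  rw [hsum, Finset.sum_product]
  have key : ∀ x ∈ T, ∀ y ∈ T,
      ((univ.filter fun σ : Perm (Fin n) => σ i ∈ T ∧ σ j ∈ T).filter
        fun σ => (σ i, σ j) = (x, y)).card =
      if x = y then 0 else (n - 2).factorial := by
    intro x hx y hy
    rw [Finset.filter_filter]
    split_ifs with hxy
    · rw [Finset.card_eq_zero, Finset.filter_eq_empty_iff]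
      intro σ _
      rintro ⟨-, h2⟩
      rw [Prod.mk.injEq] at h2
      exact hij (σ.injective (h2.1.trans (hxy.trans h2.2.symm)))
    · have : Finset.filter (fun σ : Perm (Fin n) => (σ i ∈ T ∧ σ j ∈ T) ∧ (σ i, σ j) = (x, y)) univ =
          Finset.filter (fun σ : Perm (Fin n) => σ i = x ∧ σ j = y) univ := by
        apply Finset.filter_congr
        intro σ _
        simp only [Prod.mk.injEq]
        constructor
        · exact fun h => h.2
        · rintro ⟨h1, h2⟩; exact ⟨⟨h1 ▸ hx, h2 ▸ hy⟩, h1, h2⟩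
      rw [this]
      exact card_pair_fix hn i j hij x y hxy
  rw [Finset.sum_congr rfl (fun x hx => Finset.sum_congr rfl (fun y hy => key x hx y hy))]
  have inner : ∀ x ∈ T, (∑ y ∈ T, if x = y then 0 else (n-2).factorial)
      = (T.card - 1) * (n-2).factorial := by
    intro x hx
    rw [← Finset.sum_erase_add _ _ hx, if_pos rfl, add_zero]
    rw [Finset.sum_congr rfl (fun y hy => if_neg (Finset.ne_of_mem_erase hy).symm),
      Finset.sum_const, smul_eq_mul, Finset.card_erase_of_mem hx]
  rw [Finset.sum_congr rfl inner, Finset.sum_const, smul_eq_mul, ← mul_assoc]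

lemma sum_sq (hn : 2 ≤ n) (S T : Finset (Fin n)) :
    ∑ σ : Perm (Fin n), ((S.filter fun i => σ i ∈ T).card)^2
      = S.card * T.card * (n-1).factorial
        + S.card * (S.card - 1) * (T.card * (T.card - 1)) * (n-2).factorial := by
  have step1 : ∀ σ : Perm (Fin n), ((S.filter fun i => σ i ∈ T).card)^2 =
      ∑ i ∈ S, ∑ j ∈ S, (if σ i ∈ T ∧ σ j ∈ T then 1 else 0) := by
    intro σ
    rw [Finset.card_filter, sq, Finset.sum_mul_sum]
    refine Finset.sum_congr rfl fun i _ => Finset.sum_congr rfl fun j _ => ?_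
    split_ifs with h1 h2 h3 <;> simp_all
  simp only [step1]
  rw [Finset.sum_comm]
  have step2 : ∀ i ∈ S, ∑ j ∈ S, ∑ σ : Perm (Fin n), (if σ i ∈ T ∧ σ j ∈ T then 1 else 0)
      = T.card * (n-1).factorial + (S.card - 1) * (T.card * (T.card - 1) * (n-2).factorial) := by
    intro i hi
    have swap : ∑ j ∈ S, ∑ σ : Perm (Fin n), (if σ i ∈ T ∧ σ j ∈ T then 1 else 0)
        = ∑ j ∈ S, ((univ.filter fun σ : Perm (Fin n) => σ i ∈ T ∧ σ j ∈ T)).card := by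
      refine Finset.sum_congr rfl fun j _ => ?_
      rw [Finset.card_filter]
    rw [swap, ← Finset.sum_erase_add _ _ hi]
    have diag : (univ.filter fun σ : Perm (Fin n) => σ i ∈ T ∧ σ i ∈ T).card
        = T.card * (n-1).factorial := by
      simp only [and_self]
      exact card_mem_fix i T
    rw [diag]
    rw [Finset.sum_congr rfl (fun j hj => card_pair_mem hn i j
      (Finset.ne_of_mem_erase hj).symm T), Finset.sum_const, smul_eq_mul,
      Finset.card_erase_of_mem hi, add_comm]
  rw [Finset.sum_congr rfl (fun i hi => (Finset.sum_comm).trans (step2 i hi)),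
    Finset.sum_const, smul_eq_mul]
  ring


end PermCount

section RelLemmas

variable {n : ℕ} [DecidableEq A] [DecidableEq B] (t : Fin n → A × B)

lemma c1_perm (σ : Equiv.Perm (Fin n)) (a : A) : c1 (permRel t σ) a = c1 t a := rfl

lemma domX_perm (σ : Equiv.Perm (Fin n)) : domX (permRel t σ) = domX t := rfl

lemma domY_perm (σ : Equiv.Perm (Fin n)) : domY (permRel t σ) = domY t := by
  ext b
  simp only [domY, permRel, Finset.mem_image, Finset.mem_univ, true_and]
  constructor
  · rintro ⟨i, h⟩; exact ⟨σ i, h⟩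
  · rintro ⟨i, h⟩; exact ⟨σ.symm i, by simpa using h⟩

lemma sum_cnt_sq (hn : 2 ≤ n) (a : A) (b : B) :
    ∑ σ : Equiv.Perm (Fin n), (cnt (permRel t σ) a b)^2
      = c1 t a * c2 t b * (n-1).factorial
        + c1 t a * (c1 t a - 1) * (c2 t b * (c2 t b - 1)) * (n-2).factorial := by
  have hc : ∀ σ : Equiv.Perm (Fin n), cnt (permRel t σ) a b =
      ((univ.filter fun i => (t i).1 = a).filter
        fun i => σ i ∈ univ.filter fun i => (t i).2 = b).card := by
    intro σ
    unfold cnt permRel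
    rw [Finset.filter_filter]
    apply congrArg
    apply Finset.filter_congr
    intro i _
    simp [Prod.ext_iff]
  simp only [hc]
  exact sum_sq hn _ _

lemma c1_pos {a : A} (ha : a ∈ domX t) : 0 < c1 t a := by
  obtain ⟨i, -, hi⟩ := Finset.mem_image.mp ha
  exact Finset.card_pos.mpr ⟨i, Finset.mem_filter.mpr ⟨Finset.mem_univ i, hi⟩⟩

lemma c2_pos {b : B} (hb : b ∈ domY t) : 0 < c2 t b := by
  obtain ⟨i, -, hi⟩ := Finset.mem_image.mp hb
  exact Finset.card_pos.mpr ⟨i, Finset.mem_filter.mpr ⟨Finset.mem_univ i, hi⟩⟩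

lemma sum_c1 : ∑ a ∈ domX t, c1 t a = n := by
  have := Finset.card_eq_sum_card_fiberwise
    (f := fun i => (t i).1) (s := (univ : Finset (Fin n))) (t := domX t)
    (fun i _ => Finset.mem_image.mpr ⟨i, Finset.mem_univ i, rfl⟩)
  simpa [c1] using this.symm

lemma sum_c2 : ∑ b ∈ domY t, c2 t b = n := by
  have := Finset.card_eq_sum_card_fiberwise
    (f := fun i => (t i).2) (s := (univ : Finset (Fin n))) (t := domY t)
    (fun i _ => Finset.mem_image.mpr ⟨i, Finset.mem_univ i, rfl⟩)
  simpa [c2] using this.symm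

end RelLemmas

/-- Expected value of probabilistic dependency under random (X;Y)-permutations
(Piatetsky-Shapiro–Matheus). -/
theorem expected_pdep_under_permutations {A B : Type*} [DecidableEq A] [DecidableEq B]
    {n : ℕ} (hn : 2 ≤ n) (t : Fin n → A × B) :
    (∑ σ : Equiv.Perm (Fin n), pdep (permRel t σ)) / (n.factorial : ℝ) =
      pdepY t + (((domX t).card : ℝ) - 1) / ((n : ℝ) - 1) * (1 - pdepY t) := by
  have hn0 : (n : ℝ) ≠ 0 := by positivity
  have hn1 : (n : ℝ) - 1 ≠ 0 := by
    have : (2:ℝ) ≤ n := by exact_mod_cast hn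
    linarith
  set e1 : ℝ := ((n-1).factorial : ℝ) with he1def
  set e2 : ℝ := ((n-2).factorial : ℝ) with he2def
  have he2 : e2 ≠ 0 := by positivity
  have hfacn : (n.factorial : ℝ) = n * e1 := by
    rw [he1def, ← Nat.cast_mul, Nat.mul_factorial_pred (by omega)]
  have hfac1 : e1 = ((n:ℝ) - 1) * e2 := by
    have h : (n - 1) * (n - 2).factorial = (n - 1).factorial := by
      have := Nat.mul_factorial_pred (n := n - 1) (by omega)
      simpa [show n - 1 - 1 = n - 2 by omega] using this
    rw [he1def, he2def, ← h]
    push_cast [Nat.cast_sub (by omega : 1 ≤ n)]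
    ring
  set s : ℝ := ∑ b ∈ domY t, ((c2 t b : ℝ))^2 with hsdef
  set K : ℝ := ((domX t).card : ℝ) with hKdef
  have hpdepY : pdepY t = s / (n:ℝ)^2 := by
    rw [pdepY, hsdef, Finset.sum_div]
    refine Finset.sum_congr rfl fun b _ => ?_
    rw [p2, div_pow]
  -- step 1: pdep of each permuted relation as a double sum
  have step1 : ∀ σ : Equiv.Perm (Fin n), pdep (permRel t σ) =
      ∑ a ∈ domX t, ∑ b ∈ domY t,
        ((cnt (permRel t σ) a b : ℝ))^2 / ((n:ℝ) * (c1 t a : ℝ)) := by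
    intro σ
    rw [pdep, domX_perm, domY_perm]
    refine Finset.sum_congr rfl fun a ha => ?_
    have hc1 : (0:ℝ) < (c1 t a : ℝ) := by exact_mod_cast c1_pos t ha
    rw [Finset.mul_sum]
    refine Finset.sum_congr rfl fun b _ => ?_
    rw [pC, pJ, p1, c1_perm]
    field_simp
  rw [Finset.sum_congr rfl (fun σ _ => step1 σ)]
  -- step 2: swap sums and apply the counting identity
  rw [Finset.sum_comm]
  have step2 : ∀ a ∈ domX t, (∑ σ : Equiv.Perm (Fin n), ∑ b ∈ domY t,
        ((cnt (permRel t σ) a b : ℝ))^2 / ((n:ℝ) * (c1 t a : ℝ)))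
      = e1 + ((c1 t a : ℝ) - 1) * (s - n) * e2 / n := by
    intro a ha
    rw [Finset.sum_comm]
    have hc1 : (0:ℝ) < (c1 t a : ℝ) := by exact_mod_cast c1_pos t ha
    have hc1n : 1 ≤ c1 t a := c1_pos t ha
    have inner : ∀ b ∈ domY t, (∑ σ : Equiv.Perm (Fin n),
          ((cnt (permRel t σ) a b : ℝ))^2 / ((n:ℝ) * (c1 t a : ℝ)))
        = (c2 t b : ℝ) * e1 / n
          + ((c1 t a : ℝ) - 1) * ((c2 t b : ℝ)^2 - (c2 t b : ℝ)) * e2 / n := by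
      intro b hb
      have hc2n : 1 ≤ c2 t b := c2_pos t hb
      rw [← Finset.sum_div]
      have hcast : (∑ σ : Equiv.Perm (Fin n), ((cnt (permRel t σ) a b : ℝ))^2)
          = ((∑ σ : Equiv.Perm (Fin n), (cnt (permRel t σ) a b)^2 : ℕ) : ℝ) := by
        push_cast; rfl
      rw [hcast, sum_cnt_sq t hn a b]
      push_cast [Nat.cast_sub hc1n, Nat.cast_sub hc2n]
      field_simp
      ring
    rw [Finset.sum_congr rfl inner, Finset.sum_add_distrib]
    have hA : ∑ b ∈ domY t, (c2 t b : ℝ) * e1 / n = e1 := by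
      rw [← Finset.sum_div, ← Finset.sum_mul]
      have : ∑ b ∈ domY t, (c2 t b : ℝ) = n := by
        exact_mod_cast congrArg (Nat.cast : ℕ → ℝ) (sum_c2 t)
      rw [this]
      field_simp
    have hB : ∑ b ∈ domY t, ((c1 t a : ℝ) - 1) * ((c2 t b : ℝ)^2 - (c2 t b : ℝ)) * e2 / n
        = ((c1 t a : ℝ) - 1) * (s - n) * e2 / n := by
      rw [← Finset.sum_div]
      congr 1
      rw [← Finset.sum_mul]
      congr 1
      rw [← Finset.mul_sum]
      congr 1
      rw [Finset.sum_sub_distrib, hsdef]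
      have : ∑ b ∈ domY t, (c2 t b : ℝ) = n := by
        exact_mod_cast congrArg (Nat.cast : ℕ → ℝ) (sum_c2 t)
      rw [this]
    rw [hA, hB]
  rw [Finset.sum_congr rfl step2, Finset.sum_add_distrib, Finset.sum_const, nsmul_eq_mul,
    ← hKdef]
  have hC : ∑ a ∈ domX t, ((c1 t a : ℝ) - 1) * (s - n) * e2 / n
      = ((n:ℝ) - K) * (s - n) * e2 / n := by
    rw [← Finset.sum_div]
    congr 1
    rw [← Finset.sum_mul, ← Finset.sum_mul]
    congr 2
    rw [Finset.sum_sub_distrib, Finset.sum_const, nsmul_eq_mul, mul_one, ← hKdef]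
    have : ∑ a ∈ domX t, (c1 t a : ℝ) = n := by
      exact_mod_cast congrArg (Nat.cast : ℕ → ℝ) (sum_c1 t)
    rw [this]
  rw [hC, hpdepY, hfacn, hfac1]
  field_simp
  ring

end AFD
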